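/- Let $\alpha > 0$, $\omega, \varepsilon > 0$, and $\psi_1, \dots, \psi_N > 0$. Then the unique minimizer of $f(t) = \sum_{n=1}^N \psi_n t_n^{-\alpha/2}$ over the set $\{t \in \mathbb{R}_{>0}^N : \omega \sum_{n=1}^N t_n = \varepsilon\}$ is given by $t_n^* = \psi_n^{2/(\alpha+2)} \cdot \left(\frac{\omega}{\varepsilon}\sum_{k=1}^N \psi_k^{2/(\alpha+2)}\right)^{-1}$. -/

import Mathlib

private lemma core_lt {β u : ℝ} (hβ : 0 < β) (hu : 0 < u) (hne : u ≠ 1) :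
    1 + β < u ^ (-β) + β * u := by
  have h1β : (0:ℝ) < 1 + β := by linarith
  set x := u ^ (1 + β) with hxdef
  have hx : (0:ℝ) < x := Real.rpow_pos_of_pos hu _
  have hxne : x ≠ 1 := by
    intro h
    apply hne
    have h2 : u = x ^ ((1 + β)⁻¹) := by
      rw [hxdef, ← Real.rpow_mul hu.le, mul_inv_cancel₀ h1β.ne', Real.rpow_one]
    rw [h2, h, Real.one_rpow]
  have hp1 : 0 < β / (1 + β) := div_pos hβ h1β
  have hp2 : β / (1 + β) < 1 := (div_lt_one h1β).mpr (by linarith)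
  have hs : (-1:ℝ) ≤ x - 1 := by linarith
  have hs' : x - 1 ≠ 0 := sub_ne_zero.mpr hxne
  have hber := rpow_one_add_lt_one_add_mul_self hs hs' hp1 hp2
  have hxx : 1 + (x - 1) = x := by ring
  rw [hxx] at hber
  have hxq : x ^ (β / (1 + β)) = u ^ β := by
    rw [hxdef, ← Real.rpow_mul hu.le]
    congr 1
    field_simp
  rw [hxq] at hber
  have hub : 0 < u ^ β := Real.rpow_pos_of_pos hu β
  have hx1 : x = u ^ β * u := by
    rw [hxdef, Real.rpow_add hu, Real.rpow_one, mul_comm]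
  have hneg : u ^ (-β) = (u ^ β)⁻¹ := Real.rpow_neg hu.le β
  have h2 : (1 + β) * (u ^ β) < (1 + β) * (1 + β / (1 + β) * (x - 1)) :=
    mul_lt_mul_of_pos_left hber h1β
  have h3 : (1 + β) * (1 + β / (1 + β) * (x - 1)) = 1 + β * x := by
    field_simp
    ring
  rw [h3, hx1] at h2
  rw [hneg]
  rw [← mul_lt_mul_iff_of_pos_right hub]
  have h4 : ((u ^ β)⁻¹ + β * u) * u ^ β = 1 + β * (u ^ β * u) := by
    field_simp
  rw [h4]
  linarith

private lemma core_le {β u : ℝ} (hβ : 0 < β) (hu : 0 < u) :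
    1 + β ≤ u ^ (-β) + β * u := by
  by_cases h : u = 1
  · simp [h]
  · exact (core_lt hβ hu h).le

private lemma term_le {β ψ c x : ℝ} (hβ : 0 < β) (hψ : 0 < ψ) (hc : 0 < c) (hx : 0 < x) :
    ψ * c ^ (-β) + β * (ψ * c ^ (-β - 1)) * c ≤ ψ * x ^ (-β) + β * (ψ * c ^ (-β - 1)) * x := by
  have hu : 0 < x / c := div_pos hx hc
  have hA : 0 < x ^ (-β) := Real.rpow_pos_of_pos hx _
  have hB : 0 < c ^ (-β) := Real.rpow_pos_of_pos hc _
  have hdiv : (x / c) ^ (-β) = x ^ (-β) / c ^ (-β) := Real.div_rpow hx.le hc.le (-β)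
  have hc1 : c ^ (-β - 1) = c ^ (-β) / c := by
    rw [Real.rpow_sub hc, Real.rpow_one]
  have core := core_le hβ hu
  rw [hdiv] at core
  have hm := mul_le_mul_of_nonneg_left core (le_of_lt (mul_pos hψ hB))
  have key : ψ * c ^ (-β) * (x ^ (-β) / c ^ (-β) + β * (x / c)) =
      ψ * x ^ (-β) + β * (ψ * (c ^ (-β) / c)) * x := by
    field_simp
  have key2 : ψ * c ^ (-β) * (1 + β) = ψ * c ^ (-β) + β * (ψ * (c ^ (-β) / c)) * c := by
    field_simp
  rw [key, key2] at hm
  rw [hc1]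
  exact hm

private lemma term_lt {β ψ c x : ℝ} (hβ : 0 < β) (hψ : 0 < ψ) (hc : 0 < c) (hx : 0 < x)
    (hne : x ≠ c) :
    ψ * c ^ (-β) + β * (ψ * c ^ (-β - 1)) * c < ψ * x ^ (-β) + β * (ψ * c ^ (-β - 1)) * x := by
  have hu : 0 < x / c := div_pos hx hc
  have hune : x / c ≠ 1 := by
    intro h
    exact hne (by field_simp at h; exact h)
  have hA : 0 < x ^ (-β) := Real.rpow_pos_of_pos hx _
  have hB : 0 < c ^ (-β) := Real.rpow_pos_of_pos hc _
  have hdiv : (x / c) ^ (-β) = x ^ (-β) / c ^ (-β) := Real.div_rpow hx.le hc.le (-β)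
  have hc1 : c ^ (-β - 1) = c ^ (-β) / c := by
    rw [Real.rpow_sub hc, Real.rpow_one]
  have core := core_lt hβ hu hune
  rw [hdiv] at core
  have hm := mul_lt_mul_of_pos_left core (mul_pos hψ hB)
  have key : ψ * c ^ (-β) * (x ^ (-β) / c ^ (-β) + β * (x / c)) =
      ψ * x ^ (-β) + β * (ψ * (c ^ (-β) / c)) * x := by
    field_simp
  have key2 : ψ * c ^ (-β) * (1 + β) = ψ * c ^ (-β) + β * (ψ * (c ^ (-β) / c)) * c := by
    field_simp
  rw [key, key2] at hm
  rw [hc1]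
  exact hm

theorem stmt_5 (N : ℕ) (hN : 0 < N) (α ω ε : ℝ) (hα : 0 < α) (hω : 0 < ω) (hε : 0 < ε)
    (ψ : Fin N → ℝ) (hψ : ∀ n, 0 < ψ n) :
    let tstar : Fin N → ℝ :=
      fun n => ψ n ^ ((2:ℝ)/(α+2)) * ((ω/ε) * ∑ k, ψ k ^ ((2:ℝ)/(α+2)))⁻¹
    (∀ n, 0 < tstar n) ∧ ω * ∑ n, tstar n = ε ∧
    (∀ t : Fin N → ℝ, (∀ n, 0 < t n) → ω * ∑ n, t n = ε →
      (∑ n, ψ n * tstar n ^ (-(α/2))) ≤ ∑ n, ψ n * t n ^ (-(α/2))) ∧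
    (∀ t : Fin N → ℝ, (∀ n, 0 < t n) → ω * ∑ n, t n = ε →
      (∑ n, ψ n * t n ^ (-(α/2))) = (∑ n, ψ n * tstar n ^ (-(α/2))) → t = tstar) := by
  intro tstar
  have hα2 : (0:ℝ) < α + 2 := by linarith
  set e : ℝ := (2:ℝ)/(α+2) with he_def
  have he : 0 < e := div_pos two_pos hα2
  set S : ℝ := ∑ k, ψ k ^ e with hS_def
  have : Nonempty (Fin N) := ⟨⟨0, hN⟩⟩
  have hSpos : 0 < S :=
    Finset.sum_pos (fun k _ => Real.rpow_pos_of_pos (hψ k) e) Finset.univ_nonempty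
  set C : ℝ := ((ω/ε) * S)⁻¹ with hC_def
  have hCpos : 0 < C := inv_pos.mpr (mul_pos (div_pos hω hε) hSpos)
  have htdef : ∀ n, tstar n = ψ n ^ e * C := fun n => rfl
  set β : ℝ := α/2 with hβ_def
  have hβ : 0 < β := by positivity
  have htpos : ∀ n, 0 < tstar n := fun n =>
    mul_pos (Real.rpow_pos_of_pos (hψ n) e) hCpos
  -- constraint
  have hsum_tstar : ∑ n, tstar n = ε/ω := by
    have : ∑ n, tstar n = S * C := by
      rw [hS_def, Finset.sum_mul]
    rw [this, hC_def]
    field_simp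
  have hconstraint : ω * ∑ n, tstar n = ε := by
    rw [hsum_tstar]
    field_simp
  -- constant multiplier
  have hconst : ∀ n, ψ n * tstar n ^ (-β - 1) = C ^ (-β - 1) := by
    intro n
    rw [htdef n, Real.mul_rpow (Real.rpow_pos_of_pos (hψ n) e).le hCpos.le,
      ← Real.rpow_mul (hψ n).le]
    have : e * (-β - 1) = -1 := by
      rw [he_def, hβ_def]
      field_simp
      ring
    rw [this, Real.rpow_neg_one, ← mul_assoc, mul_inv_cancel₀ (hψ n).ne', one_mul]
  -- per-term inequalities with constant multiplier
  have hterm : ∀ (t : Fin N → ℝ), (∀ n, 0 < t n) → ∀ n,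
      ψ n * tstar n ^ (-β) + β * C ^ (-β - 1) * tstar n ≤
        ψ n * t n ^ (-β) + β * C ^ (-β - 1) * t n := by
    intro t ht n
    have h := term_le hβ (hψ n) (htpos n) (ht n)
    rwa [hconst n] at h
  have hterm_lt : ∀ (t : Fin N → ℝ), (∀ n, 0 < t n) → ∀ n, t n ≠ tstar n →
      ψ n * tstar n ^ (-β) + β * C ^ (-β - 1) * tstar n <
        ψ n * t n ^ (-β) + β * C ^ (-β - 1) * t n := by
    intro t ht n hne
    have h := term_lt hβ (hψ n) (htpos n) (ht n) hne
    rwa [hconst n] at h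
  have hexp : -(α/2) = -β := by rw [hβ_def]
  refine ⟨htpos, hconstraint, ?_, ?_⟩
  · intro t ht hsum
    have hsum_t : ∑ n, t n = ε/ω := by
      field_simp at hsum ⊢
      linarith
    have hs : ∑ n, (ψ n * tstar n ^ (-β) + β * C ^ (-β - 1) * tstar n) ≤
        ∑ n, (ψ n * t n ^ (-β) + β * C ^ (-β - 1) * t n) :=
      Finset.sum_le_sum (fun n _ => hterm t ht n)
    rw [Finset.sum_add_distrib, Finset.sum_add_distrib, ← Finset.mul_sum, ← Finset.mul_sum,
      hsum_t, hsum_tstar] at hs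
    rw [hexp]
    linarith
  · intro t ht hsum heq
    by_contra hne
    obtain ⟨m, hm⟩ := Function.ne_iff.mp hne
    have hsum_t : ∑ n, t n = ε/ω := by
      field_simp at hsum ⊢
      linarith
    have hs : ∑ n, (ψ n * tstar n ^ (-β) + β * C ^ (-β - 1) * tstar n) <
        ∑ n, (ψ n * t n ^ (-β) + β * C ^ (-β - 1) * t n) :=
      Finset.sum_lt_sum (fun n _ => hterm t ht n)
        ⟨m, Finset.mem_univ m, hterm_lt t ht m hm⟩
    rw [Finset.sum_add_distrib, Finset.sum_add_distrib, ← Finset.mul_sum, ← Finset.mul_sum,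
      hsum_t, hsum_tstar] at hs
    rw [hexp] at heq
    linarith
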